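/- arXiv:1810.03107 — 3 statements merged into one kernel-verified Lean document; each statement's English description precedes it below -/
import Mathlib

section
/- Define I_{i,j}(h) = ∫_{Γ_h^+} x^{i-4} y^j dx, where Γ_h^+ is the upper half of the level curve H(x,y) = h, h ∈ (-1,0). Then for all integers i ≥ -1 and j ≥ 2: (2i + 3j - 6)·I_{i,j}(h) = 4j·(I_{i+2,j-2}(h) - I_{i+1,j-2}(h)). -/
/-- The y-coordinate of the upper branch of the level curve H = h. -/
noncomputable def yy (h x : ℝ) : ℝ := Real.sqrt (2*h*x^3 + 4*x^2 - 2*x)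

/-- Left endpoint of the upper branch of the level curve H = h. -/
noncomputable def xl (h : ℝ) : ℝ := (1 - Real.sqrt (1 + h)) / (-h)

/-- Right endpoint of the upper branch of the level curve H = h. -/
noncomputable def xr (h : ℝ) : ℝ := (1 + Real.sqrt (1 + h)) / (-h)

/-- I_{i,j}(h) = ∫ over Γ_h⁺ of x^{i-4} y^j dx, over the upper branch. -/
noncomputable def Iint (i : ℤ) (j : ℕ) (h : ℝ) : ℝ :=
  ∫ x in xl h..xr h, x ^ (i - 4) * yy h x ^ j

section
variable {h : ℝ} (h1 : -1 < h) (h0 : h < 0)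
include h1 h0

lemma key (x : ℝ) : 2*h*x^3 + 4*x^2 - 2*x = (-2*h) * x * (x - xl h) * (xr h - x) := by
  have hne : h ≠ 0 := ne_of_lt h0
  have hs2 : Real.sqrt (1+h) ^ 2 = 1 + h := Real.sq_sqrt (by linarith)
  have hsum : h * (xl h + xr h) = -2 := by
    unfold xl xr; field_simp; ring
  have hprod : h * (xl h * xr h) = -1 := by
    unfold xl xr; field_simp; linear_combination (-1) * hs2
  linear_combination (2*x^2) * hsum + (-2*x) * hprod

lemma xl_pos : 0 < xl h := by
  have hs2 : Real.sqrt (1+h) ^ 2 = 1 + h := Real.sq_sqrt (by linarith)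
  have hsn : 0 ≤ Real.sqrt (1+h) := Real.sqrt_nonneg _
  have hs1 : Real.sqrt (1+h) < 1 := by nlinarith
  exact div_pos (by linarith) (by linarith)

lemma xl_lt_xr : xl h < xr h := by
  have hsp : 0 < Real.sqrt (1+h) := Real.sqrt_pos.mpr (by linarith)
  unfold xl xr
  have hne : (0:ℝ) < -h := by linarith
  exact div_lt_div_of_pos_right (by linarith) hne

end

section
variable {h : ℝ} (h1 : -1 < h) (h0 : h < 0)
include h1 h0

lemma P_nonneg {x : ℝ} (hx : x ∈ Set.Icc (xl h) (xr h)) :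
    0 ≤ 2*h*x^3 + 4*x^2 - 2*x := by
  rw [key h1 h0]
  have hxl := xl_pos h1 h0
  obtain ⟨ha, hb⟩ := hx
  have : (0:ℝ) < -2*h := by linarith
  have hx0 : 0 < x := lt_of_lt_of_le hxl ha
  have h2 : 0 ≤ x - xl h := by linarith
  have h3 : 0 ≤ xr h - x := by linarith
  have := mul_nonneg (mul_nonneg (mul_nonneg (le_of_lt this) (le_of_lt hx0)) h2) h3
  linarith [this]

lemma P_pos {x : ℝ} (hx : x ∈ Set.Ioo (xl h) (xr h)) :
    0 < 2*h*x^3 + 4*x^2 - 2*x := by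
  rw [key h1 h0]
  have hxl := xl_pos h1 h0
  obtain ⟨ha, hb⟩ := hx
  have hm : (0:ℝ) < -2*h := by linarith
  have hx0 : 0 < x := lt_trans hxl ha
  have h2 : 0 < x - xl h := by linarith
  have h3 : 0 < xr h - x := by linarith
  have := mul_pos (mul_pos (mul_pos hm hx0) h2) h3
  linarith

lemma yy_sq {x : ℝ} (hx : x ∈ Set.Icc (xl h) (xr h)) :
    yy h x ^ 2 = 2*h*x^3 + 4*x^2 - 2*x :=
  Real.sq_sqrt (P_nonneg h1 h0 hx)

lemma yy_pos {x : ℝ} (hx : x ∈ Set.Ioo (xl h) (xr h)) : 0 < yy h x :=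
  Real.sqrt_pos.mpr (P_pos h1 h0 hx)

lemma yy_xl : yy h (xl h) = 0 := by
  unfold yy
  rw [key h1 h0, sub_self, mul_zero, zero_mul, Real.sqrt_zero]

lemma yy_xr : yy h (xr h) = 0 := by
  unfold yy
  rw [key h1 h0, sub_self, mul_zero, Real.sqrt_zero]

end

lemma yy_cont (h : ℝ) : Continuous (yy h) := by
  unfold yy
  exact Real.continuous_sqrt.comp (by continuity)

lemma deriv_main {h : ℝ} (h1 : -1 < h) (h0 : h < 0) (i : ℤ) (j n : ℕ) (hjn : j = n + 2)
    {x : ℝ} (hx : x ∈ Set.Ioo (xl h) (xr h)) :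
    HasDerivAt (fun x => x ^ (i-3) * yy h x ^ j)
      (((i:ℝ)-3+3*(j:ℝ)/2) * (x ^ (i-4) * yy h x ^ j)
        + (-2*(j:ℝ)) * (x ^ (i-2) * yy h x ^ n)
        + (2*(j:ℝ)) * (x ^ (i-3) * yy h x ^ n)) x := by
  have hx0 : 0 < x := lt_trans (xl_pos h1 h0) hx.1
  have hP : 0 < 2*h*x^3 + 4*x^2 - 2*x := P_pos h1 h0 hx
  have hy : 0 < yy h x := yy_pos h1 h0 hx
  have hysq : yy h x ^ 2 = 2*h*x^3 + 4*x^2 - 2*x :=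
    yy_sq h1 h0 (Set.mem_Icc_of_Ioo hx)
  have hPd : HasDerivAt (fun x : ℝ => 2*h*x^3 + 4*x^2 - 2*x) (6*h*x^2 + 8*x - 2) x := by
    have d := (((hasDerivAt_pow 3 x).const_mul (2*h)).add
      ((hasDerivAt_pow 2 x).const_mul (4:ℝ))).sub ((hasDerivAt_id x).const_mul (2:ℝ))
    refine d.congr_deriv ?_
    push_cast; ring
  have hyd : HasDerivAt (yy h) (1/(2 * yy h x) * (6*h*x^2 + 8*x - 2)) x := by
    have := (Real.hasDerivAt_sqrt (ne_of_gt hP)).comp x hPd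
    exact this
  have hyj : HasDerivAt (fun x => yy h x ^ j)
      ((j:ℝ) * yy h x ^ (j-1) * (1/(2 * yy h x) * (6*h*x^2 + 8*x - 2))) x := hyd.pow j
  have hzp : HasDerivAt (fun x : ℝ => x ^ (i-3)) (((i:ℝ)-3) * x ^ (i-4)) x := by
    have := hasDerivAt_zpow (i-3) x (Or.inl hx0.ne')
    refine this.congr_deriv ?_
    rw [show i - 3 - 1 = i - 4 by ring]; push_cast; ring
  have hf := hzp.mul hyj
  refine hf.congr_deriv (Eq.symm ?_)
  have hj1 : j - 1 = n + 1 := by omega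
  have e1 : x ^ (i-3) = x ^ (i-4) * x := by
    rw [← zpow_add_one₀ hx0.ne']; congr 1; omega
  have e2 : x ^ (i-2) = x ^ (i-4) * (x*x) := by
    rw [show x*x = x^(2:ℤ) by rw [zpow_two], ← zpow_add₀ hx0.ne']; congr 1; omega
  rw [e1, e2, hj1, hjn, pow_add, pow_succ]
  field_simp
  push_cast
  linear_combination (3*(n:ℝ)+6) * (yy h x * yy h x ^ n) * hysq


open MeasureTheory intervalIntegral

/-- For all integers i ≥ -1 and j ≥ 2:
(2i + 3j - 6)·I_{i,j}(h) = 4j·(I_{i+2,j-2}(h) - I_{i+1,j-2}(h)). -/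
theorem Iint_recurrence_one (i : ℤ) (hi : -1 ≤ i) (j : ℕ) (hj : 2 ≤ j)
    (h : ℝ) (hh : h ∈ Set.Ioo (-1 : ℝ) 0) :
    ((2*i + 3*(j : ℤ) - 6 : ℤ) : ℝ) * Iint i j h
      = 4 * (j : ℝ) * (Iint (i+2) (j-2) h - Iint (i+1) (j-2) h) := by
  obtain ⟨h1, h0⟩ := hh
  have hab : xl h ≤ xr h := (xl_lt_xr h1 h0).le
  have hxlp := xl_pos h1 h0
  set n := j - 2 with hn
  have hjn : j = n + 2 := by omega
  have contm : ∀ (m : ℤ) (k : ℕ),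
      ContinuousOn (fun x : ℝ => x ^ m * yy h x ^ k) (Set.Icc (xl h) (xr h)) := by
    intro m k
    apply ContinuousOn.mul
    · intro x hx
      exact (continuousAt_zpow₀ x m (Or.inl (lt_of_lt_of_le hxlp hx.1).ne')).continuousWithinAt
    · exact ((yy_cont h).pow k).continuousOn
  have ii : ∀ (m : ℤ) (k : ℕ),
      IntervalIntegrable (fun x : ℝ => x ^ m * yy h x ^ k) volume (xl h) (xr h) := by
    intro m k
    apply ContinuousOn.intervalIntegrable
    rw [Set.uIcc_of_le hab]
    exact contm m k
  set a1 : ℝ := (i:ℝ)-3+3*(j:ℝ)/2 with ha1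
  have hEint : IntervalIntegrable (fun x : ℝ =>
      a1 * (x ^ (i-4) * yy h x ^ j) + (-2*(j:ℝ)) * (x ^ (i-2) * yy h x ^ n)
        + (2*(j:ℝ)) * (x ^ (i-3) * yy h x ^ n)) volume (xl h) (xr h) :=
    (((ii (i-4) j).const_mul a1).add ((ii (i-2) n).const_mul _)).add
      ((ii (i-3) n).const_mul _)
  have hft := integral_eq_sub_of_hasDeriv_right_of_le hab (contm (i-3) j)
    (fun x hx => (deriv_main h1 h0 i j n hjn hx).hasDerivWithinAt) hEint
  rw [yy_xl h1 h0, yy_xr h1 h0, zero_pow (by omega : j ≠ 0), mul_zero, mul_zero,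
    sub_zero] at hft
  have hsplit : (∫ x in xl h..xr h,
      (a1 * (x ^ (i-4) * yy h x ^ j) + (-2*(j:ℝ)) * (x ^ (i-2) * yy h x ^ n)
        + (2*(j:ℝ)) * (x ^ (i-3) * yy h x ^ n)))
      = a1 * Iint i j h + (-2*(j:ℝ)) * Iint (i+2) n h + (2*(j:ℝ)) * Iint (i+1) n h := by
    rw [integral_add (((ii (i-4) j).const_mul a1).add ((ii (i-2) n).const_mul _))
        ((ii (i-3) n).const_mul _),
      integral_add ((ii (i-4) j).const_mul a1) ((ii (i-2) n).const_mul _),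
      intervalIntegral.integral_const_mul, intervalIntegral.integral_const_mul,
        intervalIntegral.integral_const_mul]
    unfold Iint
    rw [show i + 2 - 4 = i - 2 by ring, show i + 1 - 4 = i - 3 by ring]
  rw [hsplit] at hft
  have hj2 : (j:ℝ) = (n:ℝ) + 2 := by exact_mod_cast congrArg Nat.cast hjn
  push_cast
  rw [ha1] at hft
  linarith [hft]
end

section
/- With I_{i,j}(h) = ∫_{Γ_h^+} x^{i-4} y^j dx, for all integers i, j ≥ 0 and h ∈ (-1,0): (2i + 3j - 6)·h·I_{i,j}(h) = (2i + j - 10)·I_{i-2,j}(h) - 4(i + j - 4)·I_{i-1,j}(h). -/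
open Set intervalIntegral in
set_option maxHeartbeats 1000000 in
/-- For all integers i, naturals j, and h ∈ (-1,0):
(2i + 3j - 6)·h·I_{i,j}(h) = (2i + j - 10)·I_{i-2,j}(h) - 4(i + j - 4)·I_{i-1,j}(h). -/
theorem Iint_recurrence_three (i : ℤ) (j : ℕ) (h : ℝ) (hh : h ∈ Set.Ioo (-1 : ℝ) 0) :
    ((2*i + 3*(j : ℤ) - 6 : ℤ) : ℝ) * h * Iint i j h
      = ((2*i + (j : ℤ) - 10 : ℤ) : ℝ) * Iint (i-2) j h
        - 4 * ((i + (j : ℤ) - 4 : ℤ) : ℝ) * Iint (i-1) j h := by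
  obtain ⟨hm1, h0⟩ := hh
  have hne : h ≠ 0 := ne_of_lt h0
  have h1p : (0:ℝ) < 1 + h := by linarith
  set s : ℝ := Real.sqrt (1+h) with hs_def
  have hs2 : s^2 = 1+h := Real.sq_sqrt h1p.le
  have hs0 : 0 < s := Real.sqrt_pos.mpr h1p
  have hs1 : s < 1 := by nlinarith
  have hxl_pos : 0 < xl h := by unfold xl; apply div_pos <;> linarith
  have hxlr : xl h < xr h := by
    unfold xl xr
    rw [div_lt_div_iff₀ (by linarith : (0:ℝ) < -h) (by linarith : (0:ℝ) < -h)]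
    nlinarith
  set a := xl h with ha_def
  set b := xr h with hb_def
  -- sum and product of the roots
  have hab1 : a + b = -2/h := by
    rw [ha_def, hb_def]; unfold xl xr; rw [← add_div]; ring_nf
  have hab2 : a * b = -1/h := by
    rw [ha_def, hb_def]; unfold xl xr
    rw [div_mul_div_comm]
    have h1 : (1 - s) * (1 + s) = -h := by nlinarith
    rw [h1]
    rw [neg_mul_neg, div_eq_div_iff (by positivity) (by simpa using hne)]
    ring
  have hab1' : h*(a+b) = -2 := by rw [hab1]; field_simp
  have hab2' : h*(a*b) = -1 := by rw [hab2]; field_simp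
  have hPfac : ∀ x : ℝ, 2*h*x^3+4*x^2-2*x = (-2*h)*x*(x-a)*(b-x) := by
    intro x
    linear_combination (2*x^2)*hab1' + (-2*x)*hab2'
  have hPnn : ∀ x ∈ Icc a b, 0 ≤ 2*h*x^3+4*x^2-2*x := by
    intro x hx
    rw [hPfac]
    have hx0 : 0 < x := lt_of_lt_of_le hxl_pos hx.1
    exact mul_nonneg (mul_nonneg (mul_nonneg (by linarith : (0:ℝ) ≤ -2*h) hx0.le)
      (by linarith [hx.1])) (by linarith [hx.2])
  have hPpos : ∀ x ∈ Ioo a b, 0 < 2*h*x^3+4*x^2-2*x := by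
    intro x hx
    rw [hPfac]
    have hx0 : 0 < x := lt_of_lt_of_le hxl_pos hx.1.le
    exact mul_pos (mul_pos (mul_pos (by linarith : (0:ℝ) < -2*h) hx0)
      (by linarith [hx.1])) (by linarith [hx.2])
  have hy2 : ∀ x ∈ Icc a b, yy h x ^ 2 = 2*h*x^3+4*x^2-2*x := by
    intro x hx; exact Real.sq_sqrt (hPnn x hx)
  have hPa : 2*h*a^3+4*a^2-2*a = 0 := by rw [hPfac]; ring
  have hPb : 2*h*b^3+4*b^2-2*b = 0 := by rw [hPfac]; ring
  have hya : yy h a = 0 := by unfold yy; rw [hPa, Real.sqrt_zero]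
  have hyb : yy h b = 0 := by unfold yy; rw [hPb, Real.sqrt_zero]
  have hcy : Continuous (yy h) := by unfold yy; fun_prop
  have hcz : ∀ k : ℤ, ContinuousOn (fun x : ℝ => x ^ k) (Icc a b) := by
    intro k
    exact (continuousOn_zpow₀ k).mono
      (fun x hx => (ne_of_gt (lt_of_lt_of_le hxl_pos hx.1) : x ≠ 0))
  have hcont : ∀ (k : ℤ) (m : ℕ),
      ContinuousOn (fun x => x ^ k * yy h x ^ m) (Icc a b) :=
    fun k m => (hcz k).mul ((hcy.pow m).continuousOn)
  have huIcc : uIcc a b = Icc a b := uIcc_of_le hxlr.le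
  have hint : ∀ (k : ℤ) (m : ℕ),
      IntervalIntegrable (fun x => x ^ k * yy h x ^ m) MeasureTheory.volume a b := by
    intro k m
    apply ContinuousOn.intervalIntegrable
    rw [huIcc]; exact hcont k m
  -- the derivative combination G
  set G : ℝ → ℝ := fun x =>
    ((i:ℝ) + 3/2*(j:ℝ) - 3) * (x^(i-7) * yy h x^(j+2))
    - (2*(j:ℝ)+4) * (x^(i-5) * yy h x^j) + (2*(j:ℝ)+4) * (x^(i-6) * yy h x^j)
    with hG_def
  have hGcont : ContinuousOn G (Icc a b) :=
    ((continuousOn_const.mul (hcont (i-7) (j+2))).sub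
      (continuousOn_const.mul (hcont (i-5) j))).add
      (continuousOn_const.mul (hcont (i-6) j))
  have hGint : IntervalIntegrable G MeasureTheory.volume a b := by
    apply ContinuousOn.intervalIntegrable; rw [huIcc]; exact hGcont
  -- derivative of F
  have hdF : ∀ x ∈ Ioo a b,
      HasDerivAt (fun x => x^(i-6) * yy h x^(j+2)) (G x) x := by
    intro x hx
    have hx0 : 0 < x := lt_of_lt_of_le hxl_pos hx.1.le
    have hP : 0 < 2*h*x^3+4*x^2-2*x := hPpos x hx
    have hy0 : 0 < yy h x := Real.sqrt_pos.mpr hP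
    have hxIcc : x ∈ Icc a b := Ioo_subset_Icc_self hx
    have hdP : HasDerivAt (fun x : ℝ => 2*h*x^3+4*x^2-2*x) (6*h*x^2+8*x-2) x := by
      have h3 : HasDerivAt (fun x : ℝ => x^3) (3*x^2) x := by simpa using hasDerivAt_pow 3 x
      have h2 : HasDerivAt (fun x : ℝ => x^2) (2*x) x := by simpa using hasDerivAt_pow 2 x
      have h1 : HasDerivAt (fun x : ℝ => x) 1 x := hasDerivAt_id' x
      have := ((h3.const_mul (2*h)).add (h2.const_mul 4)).sub (h1.const_mul 2)
      exact this.congr_deriv (by ring)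
    have hdy : HasDerivAt (yy h) ((6*h*x^2+8*x-2)/(2*yy h x)) x := by
      have := hdP.sqrt (ne_of_gt hP)
      exact this
    have hdyp : HasDerivAt (fun x => yy h x ^ (j+2))
        ((((j:ℝ))+2) * yy h x ^ j * (3*h*x^2+4*x-1)) x := by
      have := hdy.pow (j+2)
      refine this.congr_deriv ?_
      have e : yy h x ^ (j+2-1) = yy h x ^ j * yy h x := by
        rw [show j+2-1 = j+1 from rfl, pow_succ]
      rw [e]
      push_cast
      field_simp
      ring
    have hdx : HasDerivAt (fun x : ℝ => x ^ (i-6)) (((i:ℝ)-6) * x^(i-7)) x := by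
      have := hasDerivAt_zpow (i-6) x (Or.inl hx0.ne')
      exact this.congr_deriv (by rw [show i-6-1 = i-7 by ring]; push_cast; ring)
    have := hdx.mul hdyp
    refine this.congr_deriv ?_
    have e1 : x^(i-6) = x^(i-7) * x := by
      rw [show i-6 = (i-7)+1 by ring, zpow_add₀ hx0.ne', zpow_one]
    have e2 : x^(i-5) = x^(i-7) * x^(2:ℕ) := by
      rw [show i-5 = (i-7)+(2:ℕ) by push_cast; ring, zpow_add₀ hx0.ne', zpow_natCast]
    have e3 : yy h x^(j+2) = yy h x^j * (2*h*x^3+4*x^2-2*x) := by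
      rw [pow_add, hy2 x hxIcc]
    rw [hG_def]
    simp only []
    rw [e1, e2, e3]
    ring
  -- continuity of F
  have hFcont : ContinuousOn (fun x => x^(i-6) * yy h x^(j+2)) (Icc a b) :=
    hcont (i-6) (j+2)
  have key : ∫ x in a..b, G x = 0 := by
    rw [integral_eq_sub_of_hasDerivAt_of_le hxlr.le hFcont hdF hGint, hya, hyb]
    simp
  -- pointwise identity
  have hpt : ∀ x ∈ Icc a b,
      (((2*i + 3*(j : ℤ) - 6 : ℤ) : ℝ) * h) * (x ^ (i-4) * yy h x ^ j)
        = ((2*i + (j : ℤ) - 10 : ℤ) : ℝ) * (x ^ (i-6) * yy h x ^ j)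
          - (4 * ((i + (j : ℤ) - 4 : ℤ) : ℝ)) * (x ^ (i-5) * yy h x ^ j) + G x := by
    intro x hx
    have hx0 : 0 < x := lt_of_lt_of_le hxl_pos hx.1
    have e1 : x^(i-6) = x^(i-7) * x := by
      rw [show i-6 = (i-7)+1 by ring, zpow_add₀ hx0.ne', zpow_one]
    have e2 : x^(i-5) = x^(i-7) * x^(2:ℕ) := by
      rw [show i-5 = (i-7)+(2:ℕ) by push_cast; ring, zpow_add₀ hx0.ne', zpow_natCast]
    have e4 : x^(i-4) = x^(i-7) * x^(3:ℕ) := by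
      rw [show i-4 = (i-7)+(3:ℕ) by push_cast; ring, zpow_add₀ hx0.ne', zpow_natCast]
    have e3 : yy h x^(j+2) = yy h x^j * (2*h*x^3+4*x^2-2*x) := by
      rw [pow_add, hy2 x hx]
    rw [hG_def]
    simp only []
    rw [e1, e2, e3, e4]
    push_cast
    ring
  -- assemble
  have hI2 : Iint (i-2) j h = ∫ x in a..b, x ^ (i-6) * yy h x ^ j := by
    unfold Iint
    rw [show i-2-4 = i-6 by ring, ← ha_def, ← hb_def]
  have hI1 : Iint (i-1) j h = ∫ x in a..b, x ^ (i-5) * yy h x ^ j := by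
    unfold Iint
    rw [show i-1-4 = i-5 by ring, ← ha_def, ← hb_def]
  rw [hI2, hI1]
  unfold Iint
  rw [← ha_def, ← hb_def]
  rw [← intervalIntegral.integral_const_mul]
  rw [intervalIntegral.integral_congr (g := fun x =>
      ((2*i + (j : ℤ) - 10 : ℤ) : ℝ) * (x ^ (i-6) * yy h x ^ j)
        - (4 * ((i + (j : ℤ) - 4 : ℤ) : ℝ)) * (x ^ (i-5) * yy h x ^ j) + G x)
    (by rw [huIcc]; intro x hx; exact hpt x hx)]
  rw [intervalIntegral.integral_add (((hint (i-6) j).const_mul _).sub ((hint (i-5) j).const_mul _)) hGint,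
    intervalIntegral.integral_sub ((hint (i-6) j).const_mul _) ((hint (i-5) j).const_mul _),
    intervalIntegral.integral_const_mul, intervalIntegral.integral_const_mul, key]
  ring
end

section
/- Let a₁, a₂ : I → ℝ be analytic on an open interval I, and suppose the linear ODE x'' + a₁(t)x' + a₂(t)x = 0 admits a solution x₀ which is nowhere zero on I. If R : I → ℝ is analytic with at most l zeros (counted with multiplicity), then every solution x of x'' + a₁(t)x' + a₂(t)x = R(t) has at most l + 2 zeros on I, counted with multiplicity. -/
open Set Filter Topology
open scoped ContDiff


/-- `f` has at most `l` zeros on `s`, counted with multiplicity: for any finite set of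
points of `s` at which `f` vanishes together with its first `m x - 1` derivatives,
the total multiplicity is at most `l`. -/
def ZerosWithMultAtMost (f : ℝ → ℝ) (s : Set ℝ) (l : ℕ) : Prop :=
  ∀ (t : Finset ℝ) (m : ℝ → ℕ), (↑t : Set ℝ) ⊆ s →
    (∀ x ∈ t, 1 ≤ m x ∧ ∀ k < m x, iteratedDeriv k f x = 0) →
    t.sum m ≤ l

lemma contDiffOn_iteratedDeriv {U : Set ℝ} (hU : IsOpen U) {f : ℝ → ℝ}
    (hf : ContDiffOn ℝ ∞ f U) : ∀ n : ℕ, ContDiffOn ℝ ∞ (iteratedDeriv n f) U := by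
  intro n
  induction n with
  | zero => simpa [iteratedDeriv_zero] using hf
  | succ n ih =>
    rw [iteratedDeriv_succ]
    exact ((contDiffOn_infty_iff_deriv_of_isOpen hU).1 ih).2

lemma hasDerivAt_iteratedDeriv {U : Set ℝ} (hU : IsOpen U) {f : ℝ → ℝ}
    (hf : ContDiffOn ℝ ∞ f U) {p : ℝ} (hp : p ∈ U) (n : ℕ) :
    HasDerivAt (iteratedDeriv n f) (iteratedDeriv (n + 1) f p) p := by
  have h1 : DifferentiableAt ℝ (iteratedDeriv n f) p :=
    (((contDiffOn_infty_iff_deriv_of_isOpen hU).1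
      (contDiffOn_iteratedDeriv hU hf n)).1 p hp).differentiableAt (hU.mem_nhds hp)
  have := h1.hasDerivAt
  rwa [← iteratedDeriv_succ] at this

lemma iteratedDeriv_add_of_mem {U : Set ℝ} (hU : IsOpen U) {A B : ℝ → ℝ}
    (hA : ContDiffOn ℝ ∞ A U) (hB : ContDiffOn ℝ ∞ B U) (n : ℕ) :
    ∀ p ∈ U, iteratedDeriv n (fun t => A t + B t) p = iteratedDeriv n A p + iteratedDeriv n B p := by
  induction n with
  | zero => intro p hp; simp [iteratedDeriv_zero]
  | succ n ih =>
    intro p hp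
    have heq : Set.EqOn (iteratedDeriv n fun t => A t + B t)
        (fun q => iteratedDeriv n A q + iteratedDeriv n B q) U := fun q hq => ih q hq
    rw [iteratedDeriv_succ,
      Filter.EventuallyEq.deriv_eq (heq.eventuallyEq_of_mem (hU.mem_nhds hp))]
    have := ((hasDerivAt_iteratedDeriv hU hA hp n).add (hasDerivAt_iteratedDeriv hU hB hp n)).deriv
    exact this

/-- Key transfer lemma: if all derivatives of `f` up to order `< m` vanish at `p`, then the same
holds for `f * h`, provided both are smooth on an open set around `p`. -/
lemma zeros_mul {U : Set ℝ} (hU : IsOpen U) :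
    ∀ (m : ℕ) (f h : ℝ → ℝ), ContDiffOn ℝ ∞ f U → ContDiffOn ℝ ∞ h U →
    ∀ p ∈ U, (∀ k < m, iteratedDeriv k f p = 0) →
    ∀ k < m, iteratedDeriv k (fun t => f t * h t) p = 0 := by
  intro m
  induction m with
  | zero => intro f h hf hh p hp hz k hk; omega
  | succ m ih =>
    intro f h hf hh p hp hz k hk
    match k with
    | 0 =>
      have := hz 0 (Nat.succ_pos m)
      simp only [iteratedDeriv_zero] at this ⊢
      rw [this, zero_mul]
    | (j+1) =>
      have hderiv : Set.EqOn (deriv fun t => f t * h t)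
          (fun q => (deriv f q * h q) + (f q * deriv h q)) U := by
        intro q hq
        have hfd : DifferentiableAt ℝ f q :=
          (hf.differentiableOn (by norm_num) q hq).differentiableAt (hU.mem_nhds hq)
        have hhd : DifferentiableAt ℝ h q :=
          (hh.differentiableOn (by norm_num) q hq).differentiableAt (hU.mem_nhds hq)
        exact deriv_mul hfd hhd
      have hf' : ContDiffOn ℝ ∞ (deriv f) U :=
        ((contDiffOn_infty_iff_deriv_of_isOpen hU).1 hf).2
      have hh' : ContDiffOn ℝ ∞ (deriv h) U :=
        ((contDiffOn_infty_iff_deriv_of_isOpen hU).1 hh).2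
      rw [iteratedDeriv_succ', Filter.EventuallyEq.iteratedDeriv_eq j
        (hderiv.eventuallyEq_of_mem (hU.mem_nhds hp))]
      have h1 : iteratedDeriv j (fun q => deriv f q * h q) p = 0 := by
        refine ih (deriv f) h hf' hh p hp ?_ j (by omega)
        intro k hk'
        have := hz (k+1) (by omega)
        rwa [iteratedDeriv_succ'] at this
      have h2 : iteratedDeriv j (fun q => f q * deriv h q) p = 0 := by
        refine ih f (deriv h) hf hh' p hp ?_ j (by omega)
        intro k hk'
        exact hz k (by omega)
      have := iteratedDeriv_add_of_mem hU (hf'.mul hh) (hf.mul hh') j p hp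
      rw [this, h1, h2, add_zero]



lemma rolle_mult (a b : ℝ) (f : ℝ → ℝ) (hf : ContinuousOn f (Set.Ioo a b)) :
    ∀ (t : Finset ℝ), (↑t : Set ℝ) ⊆ Set.Ioo a b → ∀ (m : ℝ → ℕ),
      (∀ x ∈ t, 1 ≤ m x ∧ ∀ k < m x, iteratedDeriv k f x = 0) →
      ∀ (ht : t.Nonempty),
      ∃ (t' : Finset ℝ) (m' : ℝ → ℕ), (↑t' : Set ℝ) ⊆ Set.Ioo a b ∧
        (∀ x ∈ t', 1 ≤ m' x ∧ ∀ k < m' x, iteratedDeriv k (deriv f) x = 0) ∧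
        (∀ y ∈ t', y ≤ t.max' ht) ∧ t.sum m ≤ t'.sum m' + 1 := by
  classical
  intro t
  induction t using Finset.strongInduction with
  | _ t IH =>
    intro hts m hm ht
    set M := t.max' ht with hM
    have hMt : M ∈ t := t.max'_mem ht
    have hMIoo : M ∈ Set.Ioo a b := hts hMt
    have hmM : 1 ≤ m M := (hm M hMt).1
    have hsum : (t.erase M).sum m + m M = t.sum m := Finset.sum_erase_add t m hMt
    -- derivative zeros at M, of multiplicity m M - 1
    have hMd : ∀ k < m M - 1, iteratedDeriv k (deriv f) M = 0 := by
      intro k hk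
      rw [← iteratedDeriv_succ']
      exact (hm M hMt).2 (k + 1) (by omega)
    by_cases h0 : (t.erase M).Nonempty
    · set M₀ := (t.erase M).max' h0 with hM₀
      have hM₀t : M₀ ∈ t.erase M := (t.erase M).max'_mem h0
      have hM₀Ioo : M₀ ∈ Set.Ioo a b := hts (Finset.mem_of_mem_erase hM₀t)
      have hM₀M : M₀ < M :=
        lt_of_le_of_ne (t.le_max' _ (Finset.mem_of_mem_erase hM₀t)) (Finset.ne_of_mem_erase hM₀t)
      obtain ⟨t'', m'', hsub'', hcond'', hmax'', hsum''⟩ :=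
        IH (t.erase M) (Finset.erase_ssubset hMt)
          ((Finset.coe_subset.mpr (Finset.erase_subset M t)).trans hts) m
          (fun x hx => hm x (Finset.mem_of_mem_erase hx)) h0
      -- Rolle between M₀ and M
      have hfM₀ : f M₀ = 0 := by
        have := (hm M₀ (Finset.mem_of_mem_erase hM₀t)).2 0 (hm M₀ (Finset.mem_of_mem_erase hM₀t)).1
        simpa [iteratedDeriv_zero] using this
      have hfM : f M = 0 := by
        have := (hm M hMt).2 0 hmM
        simpa [iteratedDeriv_zero] using this
      have hIcc : Set.Icc M₀ M ⊆ Set.Ioo a b := Set.Icc_subset_Ioo hM₀Ioo.1 hMIoo.2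
      obtain ⟨c, hcmem, hc0⟩ := exists_deriv_eq_zero hM₀M (hf.mono hIcc) (hfM₀.trans hfM.symm)
      have hcIoo : c ∈ Set.Ioo a b := hIcc ⟨le_of_lt hcmem.1, le_of_lt hcmem.2⟩
      have hcM : c < M := hcmem.2
      have hcM₀ : M₀ < c := hcmem.1
      have hct'' : c ∉ t'' := fun h => absurd (hmax'' c h) (not_le.mpr hcM₀)
      have hMt'' : M ∉ t'' := fun h => absurd (hmax'' M h) (not_le.mpr (hM₀M))
      set m' : ℝ → ℕ := fun y => if y = M then m M - 1 else if y = c then 1 else m'' y with hm'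
      have hm'c : m' c = 1 := by simp [hm', ne_of_lt hcM]
      have hm't'' : ∀ y ∈ t'', m' y = m'' y := by
        intro y hy
        have h1 : y ≠ M := fun h => hMt'' (h ▸ hy)
        have h2 : y ≠ c := fun h => hct'' (h ▸ hy)
        simp [hm', h1, h2]
      have hcondc : 1 ≤ m' c ∧ ∀ k < m' c, iteratedDeriv k (deriv f) c = 0 := by
        refine ⟨le_of_eq hm'c.symm, ?_⟩
        intro k hk
        rw [hm'c] at hk
        interval_cases k
        simpa [iteratedDeriv_zero] using hc0
      have hsum_t'' : t''.sum m' = t''.sum m'' := Finset.sum_congr rfl hm't''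
      by_cases h2M : 2 ≤ m M
      · refine ⟨insert M (insert c t''), m', ?_, ?_, ?_, ?_⟩
        · intro y hy
          simp only [Finset.coe_insert, Set.mem_insert_iff] at hy
          rcases hy with rfl | rfl | hy
          · exact hMIoo
          · exact hcIoo
          · exact hsub'' hy
        · intro y hy
          rcases Finset.mem_insert.mp hy with rfl | hy
          · have hm'M : m' M = m M - 1 := by simp [hm']
            rw [hm'M]
            exact ⟨by omega, hMd⟩
          · rcases Finset.mem_insert.mp hy with rfl | hy
            · exact hcondc
            · rw [hm't'' y hy]
              exact hcond'' y hy
        · intro y hy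
          rcases Finset.mem_insert.mp hy with rfl | hy
          · exact le_refl _
          · rcases Finset.mem_insert.mp hy with rfl | hy
            · exact le_of_lt hcM
            · exact (hmax'' y hy).trans (le_of_lt hM₀M)
        · have hMnotin : M ∉ insert c t'' := by
            intro h
            rcases Finset.mem_insert.mp h with h | h
            · exact absurd h.symm (ne_of_lt hcM)
            · exact hMt'' h
          rw [Finset.sum_insert hMnotin, Finset.sum_insert hct'', hsum_t'']
          have e1 : m' M = m M - 1 := by simp [hm']
          have e2 : m' c = 1 := hm'c
          simp only [hm'] at e1 e2 ⊢
          omega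
      · -- m M = 1
        refine ⟨insert c t'', m', ?_, ?_, ?_, ?_⟩
        · intro y hy
          simp only [Finset.coe_insert, Set.mem_insert_iff] at hy
          rcases hy with rfl | hy
          · exact hcIoo
          · exact hsub'' hy
        · intro y hy
          rcases Finset.mem_insert.mp hy with rfl | hy
          · exact hcondc
          · rw [hm't'' y hy]
            exact hcond'' y hy
        · intro y hy
          rcases Finset.mem_insert.mp hy with rfl | hy
          · exact le_of_lt hcM
          · exact (hmax'' y hy).trans (le_of_lt hM₀M)
        · rw [Finset.sum_insert hct'', hsum_t'']
          have e2 : m' c = 1 := hm'c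
          simp only [hm', if_neg (ne_of_lt hcM), if_pos rfl] at e2 ⊢
          omega
    · -- t = {M}
      have htM : t.sum m = m M := by
        have : (t.erase M).sum m = 0 := by
          rw [Finset.not_nonempty_iff_eq_empty.mp h0, Finset.sum_empty]
        omega
      by_cases h2M : 2 ≤ m M
      · refine ⟨{M}, fun y => m y - 1, ?_, ?_, ?_, ?_⟩
        · intro y hy
          simp only [Finset.coe_singleton, Set.mem_singleton_iff] at hy
          exact hy ▸ hMIoo
        · intro y hy
          rw [Finset.mem_singleton] at hy
          subst hy
          constructor
          · show 1 ≤ m M - 1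
            omega
          · show ∀ k < m M - 1, iteratedDeriv k (deriv f) M = 0
            exact hMd
        · intro y hy
          rw [Finset.mem_singleton] at hy
          exact le_of_eq hy
        · rw [Finset.sum_singleton, htM]; omega
      · exact ⟨∅, fun _ => 0, by simp, by simp, by simp, by rw [Finset.sum_empty, htM]; omega⟩

lemma ZerosWithMultAtMost.of_deriv {a b : ℝ} {f : ℝ → ℝ} {l : ℕ}
    (hf : ContinuousOn f (Set.Ioo a b))
    (h : ZerosWithMultAtMost (deriv f) (Set.Ioo a b) l) :
    ZerosWithMultAtMost f (Set.Ioo a b) (l + 1) := by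
  intro t m hts hm
  rcases t.eq_empty_or_nonempty with rfl | ht
  · simp
  obtain ⟨t', m', hsub', hcond', _, hsum'⟩ := rolle_mult a b f hf t hts m hm ht
  have := h t' m' hsub' hcond'
  omega

/-- Propositions 3.1–3.2 (Gavrilov–Iliev): if the homogeneous analytic linear ODE
`x'' + a₁ x' + a₂ x = 0` on the open interval `(a,b)` has a nowhere-vanishing solution
`x₀`, and `R` is analytic with at most `l` zeros counted with multiplicity, then every
solution of `x'' + a₁ x' + a₂ x = R` has at most `l + 2` zeros counted with multiplicity. -/
theorem nonhomogeneous_zero_bound (a b : ℝ) (hab : a < b) (a₁ a₂ R : ℝ → ℝ) (l : ℕ)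
    (ha₁ : AnalyticOnNhd ℝ a₁ (Set.Ioo a b))
    (ha₂ : AnalyticOnNhd ℝ a₂ (Set.Ioo a b))
    (hR : AnalyticOnNhd ℝ R (Set.Ioo a b))
    (x₀ : ℝ → ℝ) (hx₀a : AnalyticOnNhd ℝ x₀ (Set.Ioo a b))
    (hx₀ : ∀ t ∈ Set.Ioo a b,
      deriv (deriv x₀) t + a₁ t * deriv x₀ t + a₂ t * x₀ t = 0)
    (hx₀0 : ∀ t ∈ Set.Ioo a b, x₀ t ≠ 0)
    (hRz : ZerosWithMultAtMost R (Set.Ioo a b) l)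
    (x : ℝ → ℝ) (hxa : AnalyticOnNhd ℝ x (Set.Ioo a b))
    (hx : ∀ t ∈ Set.Ioo a b,
      deriv (deriv x) t + a₁ t * deriv x t + a₂ t * x t = R t) :
    ZerosWithMultAtMost x (Set.Ioo a b) (l + 2) := by
  have hso : IsOpen (Set.Ioo a b) := isOpen_Ioo
  set s : Set ℝ := Set.Ioo a b with hs_def
  -- basic analyticity
  have hinv : AnalyticOnNhd ℝ (fun t => (x₀ t)⁻¹) s := hx₀a.inv hx₀0
  set u : ℝ → ℝ := fun t => x t * (x₀ t)⁻¹ with hu_def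
  have hu : AnalyticOnNhd ℝ u s := hxa.mul hinv
  have hu' : AnalyticOnNhd ℝ (deriv u) s := hu.deriv
  have hv' : AnalyticOnNhd ℝ (deriv x₀) s := hx₀a.deriv
  set c : ℝ → ℝ := fun t => a₁ t + 2 * deriv x₀ t * (x₀ t)⁻¹ with hc_def
  have hc : AnalyticOnNhd ℝ c s := ha₁.add ((analyticOnNhd_const.mul hv').mul hinv)
  -- integrating factor
  set F : ℝ → ℝ := fun t => ∫ τ in ((a+b)/2)..t, c τ with hF_def
  have hccont : ContinuousOn c s := hc.continuousOn
  have hmid : (a+b)/2 ∈ s := ⟨by linarith, by linarith⟩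
  have hF : ∀ p ∈ s, HasDerivAt F (c p) p := by
    intro p hp
    apply intervalIntegral.integral_hasDerivAt_right
    · exact (hccont.mono (Set.ordConnected_Ioo.uIcc_subset hmid hp)).intervalIntegrable
    · exact hccont.stronglyMeasurableAtFilter hso p hp
    · exact hccont.continuousAt (hso.mem_nhds hp)
  have hFs : ContDiffOn ℝ ∞ F s := by
    rw [contDiffOn_infty_iff_deriv_of_isOpen hso]
    refine ⟨fun p hp => ((hF p hp).differentiableAt).differentiableWithinAt, ?_⟩
    exact (hc.contDiffOn hso.uniqueDiffOn).congr fun p hp => (hF p hp).deriv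
  set E : ℝ → ℝ := fun t => Real.exp (F t) with hE_def
  have hE : ContDiffOn ℝ ∞ E s := Real.contDiff_exp.comp_contDiffOn hFs
  have hEneg : ContDiffOn ℝ ∞ (fun t => Real.exp (-F t)) s :=
    Real.contDiff_exp.comp_contDiffOn hFs.neg
  -- smoothness from analyticity
  have hxs : ContDiffOn ℝ ∞ x s := hxa.contDiffOn hso.uniqueDiffOn
  have hvs : ContDiffOn ℝ ∞ x₀ s := hx₀a.contDiffOn hso.uniqueDiffOn
  have hinvs : ContDiffOn ℝ ∞ (fun t => (x₀ t)⁻¹) s := hinv.contDiffOn hso.uniqueDiffOn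
  have hRs : ContDiffOn ℝ ∞ R s := hR.contDiffOn hso.uniqueDiffOn
  have hu's : ContDiffOn ℝ ∞ (deriv u) s := hu'.contDiffOn hso.uniqueDiffOn
  set w : ℝ → ℝ := fun t => E t * deriv u t with hw_def
  have hw : ContDiffOn ℝ ∞ w s := hE.mul hu's
  set g : ℝ → ℝ := fun t => E t * R t * (x₀ t)⁻¹ with hg_def
  have hg : ContDiffOn ℝ ∞ g s := (hE.mul hRs).mul hinvs
  have hh2 : ContDiffOn ℝ ∞ (fun t => x₀ t * Real.exp (-F t)) s := hvs.mul hEneg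
  -- first derivative of u
  set u₁ : ℝ → ℝ := fun t => deriv x t * (x₀ t)⁻¹ - x t * deriv x₀ t * ((x₀ t)^2)⁻¹ with hu₁_def
  have hu1 : ∀ p ∈ s, HasDerivAt u (u₁ p) p := by
    intro p hp
    have hxd : HasDerivAt x (deriv x p) p := (hxa p hp).differentiableAt.hasDerivAt
    have hvd : HasDerivAt x₀ (deriv x₀ p) p := (hx₀a p hp).differentiableAt.hasDerivAt
    have hv0 := hx₀0 p hp
    have h : HasDerivAt (fun t => x t * (x₀ t)⁻¹) _ p := hxd.mul (hvd.inv hv0)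
    convert h using 1
    simp only [hu₁_def]
    field_simp
    ring
  have hderivu : Set.EqOn (deriv u) u₁ s := fun p hp => (hu1 p hp).deriv
  -- derivative of w equals g on s
  have hderivw : Set.EqOn (deriv w) g s := by
    intro p hp
    have hv0 := hx₀0 p hp
    have hxd : HasDerivAt x (deriv x p) p := (hxa p hp).differentiableAt.hasDerivAt
    have hvd : HasDerivAt x₀ (deriv x₀ p) p := (hx₀a p hp).differentiableAt.hasDerivAt
    have hxdd : HasDerivAt (deriv x) (deriv (deriv x) p) p :=
      (hxa.deriv p hp).differentiableAt.hasDerivAt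
    have hvdd : HasDerivAt (deriv x₀) (deriv (deriv x₀) p) p :=
      (hv' p hp).differentiableAt.hasDerivAt
    have hA : HasDerivAt (fun t => deriv x t * (x₀ t)⁻¹)
        (deriv (deriv x) p * (x₀ p)⁻¹ + deriv x p * (-deriv x₀ p / (x₀ p)^2)) p :=
      hxdd.mul (hvd.inv hv0)
    have hsq : HasDerivAt (fun t => (x₀ t)^2) (2 * x₀ p ^ 1 * deriv x₀ p) p := by
      simpa using hvd.fun_pow 2
    have hsq0 : (x₀ p)^2 ≠ 0 := pow_ne_zero 2 hv0
    have hB : HasDerivAt (fun t => x t * deriv x₀ t * ((x₀ t)^2)⁻¹)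
        ((deriv x p * deriv x₀ p + x p * deriv (deriv x₀) p) * ((x₀ p)^2)⁻¹
          + x p * deriv x₀ p * (-(2 * x₀ p ^ 1 * deriv x₀ p) / ((x₀ p)^2)^2)) p :=
      (hxd.mul hvdd).mul (hsq.inv hsq0)
    have hu₁d : HasDerivAt u₁ (
        (deriv (deriv x) p * (x₀ p)⁻¹ + deriv x p * (-deriv x₀ p / (x₀ p)^2))
        - ((deriv x p * deriv x₀ p + x p * deriv (deriv x₀) p) * ((x₀ p)^2)⁻¹
          + x p * deriv x₀ p * (-(2 * x₀ p ^ 1 * deriv x₀ p) / ((x₀ p)^2)^2))) p := hA.sub hB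
    have hEd : HasDerivAt E (Real.exp (F p) * c p) p := (hF p hp).exp
    have hwEq : Set.EqOn w (fun t => E t * u₁ t) s := by
      intro q hq
      simp only [hw_def]
      rw [hderivu hq]
    have h1 : deriv w p = deriv (fun t => E t * u₁ t) p :=
      Filter.EventuallyEq.deriv_eq (hwEq.eventuallyEq_of_mem (hso.mem_nhds hp))
    have h2 := (hEd.mul hu₁d).deriv
    rw [h1, show (fun t => E t * u₁ t) = E * u₁ from rfl, h2]
    -- now pure algebra using the two ODEs
    have hxode := hx p hp
    have hvode := hx₀ p hp
    have hE0 : Real.exp (F p) ≠ 0 := Real.exp_ne_zero _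
    simp only [hg_def, hE_def, hu₁_def, hc_def]
    field_simp
    ring_nf
    linear_combination (x₀ p ^ 2) * hxode - (x₀ p * x p) * hvode
  -- Step 1: deriv w has at most l zeros (transported from R)
  have hZw' : ZerosWithMultAtMost (deriv w) s l := by
    intro t m hts hm
    apply hRz t m hts
    intro p hp
    obtain ⟨h1, h2⟩ := hm p hp
    have hps : p ∈ s := hts hp
    refine ⟨h1, ?_⟩
    have hgz : ∀ k < m p, iteratedDeriv k g p = 0 := by
      intro k hk
      have h3 := h2 k hk
      rwa [Filter.EventuallyEq.iteratedDeriv_eq k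
        (hderivw.eventuallyEq_of_mem (hso.mem_nhds hps))] at h3
    have hmul := zeros_mul hso (m p) g (fun t => x₀ t * Real.exp (-F t)) hg hh2 p hps hgz
    have hEqR : Set.EqOn (fun t => g t * (x₀ t * Real.exp (-F t))) R s := by
      intro q hq
      have hv0 := hx₀0 q hq
      simp only [hg_def, hE_def]
      rw [Real.exp_neg]
      field_simp
    intro k hk
    rw [← Set.EqOn.iteratedDeriv_of_isOpen hEqR hso k hps]
    exact hmul k hk
  -- Step 2: w has at most l+1 zeros
  have hZw : ZerosWithMultAtMost w s (l+1) :=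
    ZerosWithMultAtMost.of_deriv hw.continuousOn hZw'
  -- Step 3: deriv u has at most l+1 zeros
  have hZu' : ZerosWithMultAtMost (deriv u) s (l+1) := by
    intro t m hts hm
    apply hZw t m hts
    intro p hp
    obtain ⟨h1, h2⟩ := hm p hp
    have hps : p ∈ s := hts hp
    refine ⟨h1, ?_⟩
    have hmul := zeros_mul hso (m p) (deriv u) E hu's hE p hps h2
    have he : Set.EqOn (fun t => deriv u t * E t) w s := by
      intro q hq
      simp only [hw_def]
      ring
    intro k hk
    rw [← Set.EqOn.iteratedDeriv_of_isOpen he hso k hps]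
    exact hmul k hk
  -- Step 4: u has at most l+2 zeros
  have hZu : ZerosWithMultAtMost u s (l+2) :=
    ZerosWithMultAtMost.of_deriv (hu.contDiffOn (n := ∞) hso.uniqueDiffOn).continuousOn hZu'
  -- Step 5: transfer to x
  intro t m hts hm
  apply hZu t m hts
  intro p hp
  obtain ⟨h1, h2⟩ := hm p hp
  exact ⟨h1, zeros_mul hso (m p) x (fun t => (x₀ t)⁻¹) hxs hinvs p (hts hp) h2⟩
end
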